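/- For every hypergraph H and every positive integer k, the following are equivalent: (1) H is a dually conformal Sperner hypergraph with dimension at most k; (2) there exists a finite simple graph G with vertex set V(H) satisfying τ_c^+(G) ≤ k such that the hyperedges of H are exactly the minimal clique transversals of G. -/

import Mathlib

open Finset
open scoped Classical

variable {V : Type*} [Fintype V] [DecidableEq V]

/-- A hypergraph on vertex set `V` is given by its finite set of hyperedges `E`;
the condition that every vertex belongs to at least one hyperedge. -/
def Covers (E : Finset (Finset V)) : Prop := ∀ v : V, ∃ e ∈ E, v ∈ e

/-- A hypergraph is Sperner if no hyperedge is contained in another hyperedge. -/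
def SpernerHG (E : Finset (Finset V)) : Prop := ∀ e ∈ E, ∀ f ∈ E, e ⊆ f → e = f

/-- A transversal of a hypergraph: a set of vertices intersecting all hyperedges. -/
def IsTransversal (E : Finset (Finset V)) (T : Finset V) : Prop := ∀ e ∈ E, (e ∩ T).Nonempty

/-- A minimal transversal: a transversal not properly containing another transversal. -/
def IsMinTransversal (E : Finset (Finset V)) (T : Finset V) : Prop :=
  IsTransversal E T ∧ ∀ T' ⊆ T, IsTransversal E T' → T' = T

/-- The dual hypergraph: its hyperedges are exactly the minimal transversals. -/
noncomputable def dualHG (E : Finset (Finset V)) : Finset (Finset V) :=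
  Finset.univ.filter fun T => IsMinTransversal E T

/-- The co-occurrence graph of a hypergraph: two distinct vertices are adjacent
iff some hyperedge contains both. -/
def coocGraph (E : Finset (Finset V)) : SimpleGraph V where
  Adj u v := u ≠ v ∧ ∃ e ∈ E, u ∈ e ∧ v ∈ e
  symm := by
    constructor
    rintro u v ⟨huv, e, he, hu, hv⟩
    exact ⟨Ne.symm huv, e, he, hv, hu⟩
  loopless := by
    constructor
    rintro v ⟨hv, -⟩
    exact hv rfl

/-- A maximal clique of a graph: a clique not properly contained in any other clique. -/
def IsMaxClique (G : SimpleGraph V) (C : Finset V) : Prop :=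
  G.IsClique (C : Set V) ∧ ∀ D : Finset V, G.IsClique (D : Set V) → C ⊆ D → D = C

/-- A hypergraph is conformal if every maximal clique of its co-occurrence graph
is a hyperedge. -/
def ConformalHG (E : Finset (Finset V)) : Prop :=
  ∀ C : Finset V, IsMaxClique (coocGraph E) C → C ∈ E

/-- A hypergraph is dually conformal if its dual hypergraph is conformal. -/
def DuallyConformalHG (E : Finset (Finset V)) : Prop :=
  ConformalHG (dualHG E)

/-- A clique transversal of a graph: a set of vertices meeting all maximal cliques. -/
def IsCliqueTransversal (G : SimpleGraph V) (X : Finset V) : Prop :=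
  ∀ C : Finset V, IsMaxClique G C → (C ∩ X).Nonempty

/-- A minimal clique transversal: a clique transversal not properly containing
another clique transversal. -/
def IsMinCliqueTransversal (G : SimpleGraph V) (X : Finset V) : Prop :=
  IsCliqueTransversal G X ∧ ∀ Y ⊆ X, IsCliqueTransversal G Y → Y = X

/-- The upper clique transversal number: the maximum size of a minimal clique
transversal. -/
noncomputable def uct (G : SimpleGraph V) : ℕ :=
  (Finset.univ.filter fun X : Finset V => IsMinCliqueTransversal G X).sup Finset.card

set_option linter.unusedSectionVars false

section Aux

lemma mem_dualHG {E : Finset (Finset V)} {T : Finset V} :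
    T ∈ dualHG E ↔ IsMinTransversal E T := by simp [dualHG]

/-- Every transversal contains a minimal transversal. -/
lemma exists_min_transversal_subset (E : Finset (Finset V)) {T : Finset V}
    (hT : IsTransversal E T) : ∃ S ⊆ T, IsMinTransversal E S := by
  obtain ⟨S, hS, hmin⟩ := Finset.exists_min_image
    (T.powerset.filter fun S => IsTransversal E S) Finset.card
    ⟨T, by simp [hT]⟩
  simp only [mem_filter, mem_powerset] at hS
  refine ⟨S, hS.1, hS.2, ?_⟩
  intro T' hT' htrans
  have hle : S.card ≤ T'.card := by
    apply hmin
    simp only [mem_filter, mem_powerset]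
    exact ⟨hT'.trans hS.1, htrans⟩
  exact Finset.eq_of_subset_of_card_le hT' hle

/-- Every clique extends to a maximal clique. -/
lemma exists_max_clique (G : SimpleGraph V) {C : Finset V}
    (hC : G.IsClique (C : Set V)) : ∃ D, C ⊆ D ∧ IsMaxClique G D := by
  obtain ⟨D, hD, hmax⟩ := Finset.exists_max_image
    (Finset.univ.filter fun D : Finset V => G.IsClique (D : Set V) ∧ C ⊆ D) Finset.card
    ⟨C, by simp [hC]⟩
  simp only [mem_filter, mem_univ, true_and] at hD
  refine ⟨D, hD.2, hD.1, ?_⟩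
  intro D' hD' hsub
  have hle : D'.card ≤ D.card := by
    apply hmax
    simp only [mem_filter, mem_univ, true_and]
    exact ⟨hD', hD.2.trans hsub⟩
  exact (Finset.eq_of_subset_of_card_le hsub hle).symm

/-- Every hyperedge is a transversal of the dual hypergraph. -/
lemma edge_transversal_dual {E : Finset (Finset V)} {e : Finset V} (he : e ∈ E) :
    IsTransversal (dualHG E) e := by
  intro T hT
  rw [mem_dualHG] at hT
  obtain ⟨v, hv⟩ := hT.1 e he
  rw [Finset.mem_inter] at hv
  exact ⟨v, Finset.mem_inter.mpr ⟨hv.2, hv.1⟩⟩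

/-- The double dual theorem for Sperner hypergraphs with nonempty edges. -/
lemma dual_dual {E : Finset (Finset V)} (hS : SpernerHG E)
    (hne : ∀ e ∈ E, e.Nonempty) : dualHG (dualHG E) = E := by
  ext X
  rw [mem_dualHG]
  constructor
  · rintro ⟨htr, hmin⟩
    -- find e ∈ E with e ⊆ X
    have hex : ∃ e ∈ E, e ⊆ X := by
      by_contra hcon
      push_neg at hcon
      have htrc : IsTransversal E (Finset.univ \ X) := by
        intro f hf
        obtain ⟨w, hw⟩ := Finset.not_subset.mp (hcon f hf)
        exact ⟨w, Finset.mem_inter.mpr ⟨hw.1, by simp [hw.2]⟩⟩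
      obtain ⟨T, hTsub, hTmin⟩ := exists_min_transversal_subset E htrc
      obtain ⟨w, hw⟩ := htr T (mem_dualHG.mpr hTmin)
      rw [Finset.mem_inter] at hw
      have := hTsub hw.1
      simp only [Finset.mem_sdiff] at this
      exact this.2 hw.2
    obtain ⟨e, he, hsub⟩ := hex
    have := hmin e hsub (edge_transversal_dual he)
    rwa [← this]
  · intro he
    refine ⟨edge_transversal_dual he, ?_⟩
    intro e' hsub htr
    by_contra hneq
    obtain ⟨v, hv, hv'⟩ := Finset.exists_of_ssubset (Finset.ssubset_iff_subset_ne.mpr ⟨hsub, hneq⟩)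
    have htrc : IsTransversal E ((Finset.univ \ X) ∪ {v}) := by
      intro f hf
      by_cases hfe : f ⊆ X
      · have hfX : f = X := hS f hf X he hfe
        subst hfX
        exact ⟨v, Finset.mem_inter.mpr ⟨hv, by simp⟩⟩
      · obtain ⟨w, hw⟩ := Finset.not_subset.mp hfe
        exact ⟨w, Finset.mem_inter.mpr ⟨hw.1, by simp [hw.2]⟩⟩
    obtain ⟨T, hTsub, hTmin⟩ := exists_min_transversal_subset E htrc
    obtain ⟨w, hw⟩ := htr T (mem_dualHG.mpr hTmin)
    rw [Finset.mem_inter] at hw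
    have hwT := hTsub hw.1
    simp only [Finset.mem_union, Finset.mem_sdiff, Finset.mem_univ, true_and,
      Finset.mem_singleton] at hwT
    rcases hwT with h | h
    · exact h (hsub hw.2)
    · subst h; exact hv' hw.2

/-- The finset of maximal cliques of a graph. -/
noncomputable def maxCliques (G : SimpleGraph V) : Finset (Finset V) :=
  Finset.univ.filter fun C => IsMaxClique G C

lemma mem_maxCliques {G : SimpleGraph V} {C : Finset V} :
    C ∈ maxCliques G ↔ IsMaxClique G C := by simp [maxCliques]

lemma cliqueTransversal_iff {G : SimpleGraph V} {X : Finset V} :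
    IsCliqueTransversal G X ↔ IsTransversal (maxCliques G) X := by
  constructor
  · intro h C hC; exact h C (mem_maxCliques.mp hC)
  · intro h C hC; exact h C (mem_maxCliques.mpr hC)

lemma minCliqueTransversal_iff {G : SimpleGraph V} {X : Finset V} :
    IsMinCliqueTransversal G X ↔ IsMinTransversal (maxCliques G) X := by
  unfold IsMinCliqueTransversal IsMinTransversal
  simp only [cliqueTransversal_iff]

lemma maxCliques_sperner (G : SimpleGraph V) : SpernerHG (maxCliques G) := by
  intro C hC D hD hsub
  rw [mem_maxCliques] at hC hD
  exact (hC.2 D hD.1 hsub).symm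

lemma maxCliques_nonempty_edges [Nonempty V] (G : SimpleGraph V) :
    ∀ C ∈ maxCliques G, C.Nonempty := by
  intro C hC
  rw [mem_maxCliques] at hC
  rw [Finset.nonempty_iff_ne_empty]
  intro h
  subst h
  obtain ⟨v⟩ := ‹Nonempty V›
  have : ({v} : Finset V) = ∅ := hC.2 {v} (by simp) (by simp)
  simp at this

/-- Any member of a hypergraph family is a clique of its co-occurrence graph. -/
lemma edge_isClique {E : Finset (Finset V)} {e : Finset V} (he : e ∈ E) :
    (coocGraph E).IsClique (e : Set V) := by
  intro u hu v hv huv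
  exact ⟨huv, e, he, hu, hv⟩

end Aux
lemma dual_sperner (E : Finset (Finset V)) : SpernerHG (dualHG E) := by
  intro T hT T' hT' hsub
  rw [mem_dualHG] at hT hT'
  exact hT'.2 T hsub hT.1

/-- For a Sperner conformal family, the maximal cliques of the co-occurrence graph
are exactly the members of the family. -/
lemma maxCliques_cooc {F : Finset (Finset V)} (hS : SpernerHG F) (hC : ConformalHG F) :
    maxCliques (coocGraph F) = F := by
  ext C
  rw [mem_maxCliques]
  constructor
  · exact fun h => hC C h
  · intro hCF
    refine ⟨edge_isClique hCF, ?_⟩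
    intro D hD hsub
    obtain ⟨M, hDM, hM⟩ := exists_max_clique (coocGraph F) hD
    have hMF : M ∈ F := hC M hM
    have hCM : C = M := hS C hCF M hMF (hsub.trans hDM)
    have hDC : D ⊆ C := by rw [hCM]; exact hDM
    exact Finset.Subset.antisymm hDC hsub

/-- The co-occurrence graph of the family of maximal cliques of `G` is `G` itself. -/
lemma cooc_maxCliques [Nonempty V] (G : SimpleGraph V) : coocGraph (maxCliques G) = G := by
  ext u v
  constructor
  · rintro ⟨huv, C, hC, hu, hv⟩
    exact (mem_maxCliques.mp hC).1 hu hv huv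
  · intro h
    have hcl : G.IsClique (({u, v} : Finset V) : Set V) := by
      rw [Finset.coe_insert, Finset.coe_singleton]
      exact SimpleGraph.isClique_pair.mpr fun _ => h
    obtain ⟨D, hD, hMax⟩ := exists_max_clique G hcl
    exact ⟨h.ne, D, mem_maxCliques.mpr hMax, hD (by simp), hD (by simp)⟩
/-- `H` is a dually conformal Sperner hypergraph of dimension at most `k`
iff there is a graph `G` on `V(H)` with `τ_c^+(G) ≤ k` whose minimal clique
transversals are exactly the hyperedges of `H`. -/
theorem dually_conformal_sperner_dim_iff [Nonempty V] (k : ℕ) (hk : 0 < k)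
    (E : Finset (Finset V)) (hcov : Covers E) :
    (SpernerHG E ∧ DuallyConformalHG E ∧ ∀ e ∈ E, e.card ≤ k) ↔
      ∃ G : SimpleGraph V, uct G ≤ k ∧
        ∀ X : Finset V, X ∈ E ↔ IsMinCliqueTransversal G X := by
  constructor
  · rintro ⟨hSp, hDC, hdim⟩
    have hne : ∀ e ∈ E, e.Nonempty := by
      intro e he
      rw [Finset.nonempty_iff_ne_empty]
      intro h
      subst h
      obtain ⟨v⟩ := ‹Nonempty V›
      obtain ⟨f, hf, hvf⟩ := hcov v
      have : (∅ : Finset V) = f := hSp ∅ he f hf (Finset.empty_subset f)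
      rw [← this] at hvf
      simp at hvf
    refine ⟨coocGraph (dualHG E), ?_, ?_⟩
    · have hmc : maxCliques (coocGraph (dualHG E)) = dualHG E :=
        maxCliques_cooc (dual_sperner E) hDC
      have hmct : ∀ X : Finset V, X ∈ E ↔ IsMinCliqueTransversal (coocGraph (dualHG E)) X := by
        intro X
        rw [minCliqueTransversal_iff, hmc, ← mem_dualHG, dual_dual hSp hne]
      apply Finset.sup_le
      intro X hX
      rw [Finset.mem_filter] at hX
      exact hdim X ((hmct X).mpr hX.2)
    · intro X
      rw [minCliqueTransversal_iff, maxCliques_cooc (dual_sperner E) hDC,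
        ← mem_dualHG, dual_dual hSp hne]
  · rintro ⟨G, huct, hE⟩
    have hEeq : E = dualHG (maxCliques G) := by
      ext X
      rw [hE X, minCliqueTransversal_iff, mem_dualHG]
    refine ⟨?_, ?_, ?_⟩
    · intro e he f hf hsub
      exact ((hE f).mp hf).2 e hsub ((hE e).mp he).1
    · show ConformalHG (dualHG E)
      have hdE : dualHG E = maxCliques G := by
        rw [hEeq, dual_dual (maxCliques_sperner G) (maxCliques_nonempty_edges G)]
      rw [hdE]
      intro C hC
      rw [cooc_maxCliques] at hC
      exact mem_maxCliques.mpr hC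
    · intro e he
      have hmem : e ∈ Finset.univ.filter fun X : Finset V => IsMinCliqueTransversal G X := by
        simp only [Finset.mem_filter, Finset.mem_univ, true_and]
        exact (hE e).mp he
      exact le_trans (Finset.le_sup (f := Finset.card) hmem) huct
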